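/- Let λ₂ > λ₁ > 0. Then the value at q₁ = 2 of the explicit Riccati solution Tᵘ from the Neumann problem satisfies Tᵘ(2) = (1/4)(λ₂ + λ₁ − λ₁²/λ₂) > λ₁/4. -/

import Mathlib

theorem stmt_13 (l1 l2 : ℝ) (h1 : 0 < l1) (h12 : l1 < l2)
    (Tu : ℝ → ℝ)
    (hTu : ∀ q, Tu q = (-(16 * l2 ^ 2 + 16 * l1 * l2) * (q ^ 2 + 4) + 32 * l1 ^ 2 * q ^ 2)
      / ((q ^ 2 + 4) ^ 2 * ((l1 - l2) * q ^ 2 - 4 * l1 - 4 * l2))) :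
    Tu 2 = (1 / 4) * (l2 + l1 - l1 ^ 2 / l2) ∧ l1 / 4 < Tu 2 := by
  have hl2 : (0:ℝ) < l2 := lt_trans h1 h12
  have heq : Tu 2 = (1 / 4) * (l2 + l1 - l1 ^ 2 / l2) := by
    rw [hTu]
    have hd : ((2:ℝ) ^ 2 + 4) ^ 2 * ((l1 - l2) * 2 ^ 2 - 4 * l1 - 4 * l2) ≠ 0 :=
      ne_of_lt (by nlinarith)
    rw [div_eq_iff hd]
    field_simp
    ring
  refine ⟨heq, ?_⟩
  rw [heq]
  have : l1 ^ 2 / l2 < l1 := by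
    rw [div_lt_iff₀ hl2]; nlinarith
  nlinarith [mul_pos h1 hl2, sq_nonneg (l2 - l1)]
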